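/- arXiv:1103.3930 — 3 statements merged into one kernel-verified Lean document; each statement's English description precedes it below -/
import Mathlib

section
/- Let b₀, b₁, b₂ be integers and set a₀ = b₀, a₁ = b₁ − 2b₀, a₂ = b₂ − 2b₁ + 3b₀. Then in ℚ⟦t⟧, with c^{(2)}_t = (1 − t)^{−b₂} (1 − 2t)^{b₁} (1 − 3t)^{−b₀} and c_i^{(2)} its t^i-coefficient, one has 2·([c₁^{(2)}]² − c₂^{(2)}) = a₂² − 2a₀ + 2a₁ − a₂. In particular the Schur polynomial [c₁^{(2)}]² − c₂^{(2)} is nonnegative if and only if a₂² − 2a₀ + 2a₁ − a₂ ≥ 0. -/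
open PowerSeries

lemma coeff_mul_one' (f g : PowerSeries ℚ) :
    coeff 1 (f * g) = coeff 0 f * coeff 1 g + coeff 1 f * coeff 0 g := by
  rw [coeff_mul, Finset.Nat.sum_antidiagonal_eq_sum_range_succ_mk]
  simp [Finset.sum_range_succ]

lemma coeff_mul_two' (f g : PowerSeries ℚ) :
    coeff 2 (f * g) = coeff 0 f * coeff 2 g + coeff 1 f * coeff 1 g
      + coeff 2 f * coeff 0 g := by
  rw [coeff_mul, Finset.Nat.sum_antidiagonal_eq_sum_range_succ_mk]
  simp [Finset.sum_range_succ]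

lemma coeff_unit (k : ℚ) (u : (PowerSeries ℚ)ˣ)
    (hu : (u : PowerSeries ℚ) = 1 - PowerSeries.C k * PowerSeries.X) :
    coeff 0 (u : PowerSeries ℚ) = 1 ∧ coeff 1 (u : PowerSeries ℚ) = -k ∧
      coeff 2 (u : PowerSeries ℚ) = 0 := by
  rw [hu]
  simp [coeff_X, coeff_one]

lemma coeff_inv_unit (k : ℚ) (u : (PowerSeries ℚ)ˣ)
    (hu : (u : PowerSeries ℚ) = 1 - PowerSeries.C k * PowerSeries.X) :
    coeff 0 ((u⁻¹ : (PowerSeries ℚ)ˣ) : PowerSeries ℚ) = 1 ∧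
    coeff 1 ((u⁻¹ : (PowerSeries ℚ)ˣ) : PowerSeries ℚ) = k ∧
    coeff 2 ((u⁻¹ : (PowerSeries ℚ)ˣ) : PowerSeries ℚ) = k ^ 2 := by
  obtain ⟨h0, h1, h2⟩ := coeff_unit k u hu
  set v : PowerSeries ℚ := ((u⁻¹ : (PowerSeries ℚ)ˣ) : PowerSeries ℚ) with hv
  have hmul : (u : PowerSeries ℚ) * v = 1 := by
    rw [hv]; exact_mod_cast u.mul_inv
  have e0 := congrArg (coeff 0) hmul
  have e1 := congrArg (coeff 1) hmul
  have e2 := congrArg (coeff 2) hmul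
  rw [coeff_mul_one'] at e1
  rw [coeff_mul_two'] at e2
  simp [coeff_one, coeff_zero_eq_constantCoeff] at e0 e1 e2
  rw [coeff_zero_eq_constantCoeff] at h0 ⊢
  have v0 : constantCoeff v = 1 := by
    rw [h0] at e0; simpa using e0
  rw [h0, h1, v0] at e1
  have v1 : coeff 1 v = k := by linarith
  rw [h0, h1, h2, v0, v1] at e2
  refine ⟨v0, v1, by nlinarith⟩

lemma coeff_zpow (k : ℚ) (u : (PowerSeries ℚ)ˣ)
    (hu : (u : PowerSeries ℚ) = 1 - PowerSeries.C k * PowerSeries.X) (n : ℤ) :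
    coeff 0 ((u ^ n : (PowerSeries ℚ)ˣ) : PowerSeries ℚ) = 1 ∧
    coeff 1 ((u ^ n : (PowerSeries ℚ)ˣ) : PowerSeries ℚ) = -n * k ∧
    coeff 2 ((u ^ n : (PowerSeries ℚ)ˣ) : PowerSeries ℚ) = n * (n - 1) / 2 * k ^ 2 := by
  obtain ⟨h0, h1, h2⟩ := coeff_unit k u hu
  obtain ⟨i0, i1, i2⟩ := coeff_inv_unit k u hu
  induction n using Int.induction_on with
  | zero => simp [coeff_one, coeff_zero_eq_constantCoeff]
  | succ n ih =>
      obtain ⟨p0, p1, p2⟩ := ih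
      have : (u ^ ((n : ℤ) + 1) : (PowerSeries ℚ)ˣ) = u ^ (n : ℤ) * u := by
        rw [zpow_add_one]
      rw [this, Units.val_mul, coeff_mul_one', coeff_mul_two',
        coeff_zero_eq_constantCoeff, map_mul] at *
      refine ⟨by rw [p0, h0]; ring, ?_, ?_⟩
      · rw [p0, p1, h0, h1]; push_cast; ring
      · rw [p0, p1, p2, h0, h1, h2]; push_cast; ring
  | pred n ih =>
      obtain ⟨p0, p1, p2⟩ := ih
      have : (u ^ (-(n : ℤ) - 1) : (PowerSeries ℚ)ˣ) = u ^ (-(n:ℤ)) * u⁻¹ := by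
        rw [zpow_sub_one]
      rw [this, Units.val_mul, coeff_mul_one', coeff_mul_two',
        coeff_zero_eq_constantCoeff, map_mul] at *
      refine ⟨by rw [p0, i0]; ring, ?_, ?_⟩
      · rw [p0, p1, i0, i1]; push_cast; ring
      · rw [p0, p1, p2, i0, i1, i2]; push_cast; ring

theorem stmt8 (b0 b1 b2 a0 a1 a2 : ℤ)
    (ha0 : a0 = b0) (ha1 : a1 = b1 - 2 * b0) (ha2 : a2 = b2 - 2 * b1 + 3 * b0)
    (u : ℕ → (PowerSeries ℚ)ˣ)
    (hu : ∀ k, (u k : PowerSeries ℚ) = 1 - PowerSeries.C (k : ℚ) * PowerSeries.X)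
    (c : PowerSeries ℚ)
    (hc : c = ((u 1 ^ (-b2) * u 2 ^ b1 * u 3 ^ (-b0) : (PowerSeries ℚ)ˣ) : PowerSeries ℚ)) :
    2 * ((PowerSeries.coeff 1) c ^ 2 - (PowerSeries.coeff 2) c) =
      ((a2 ^ 2 - 2 * a0 + 2 * a1 - a2 : ℤ) : ℚ) ∧
    (0 ≤ (PowerSeries.coeff 1) c ^ 2 - (PowerSeries.coeff 2) c ↔
      0 ≤ a2 ^ 2 - 2 * a0 + 2 * a1 - a2) := by
  obtain ⟨f0, f1, f2⟩ := coeff_zpow 1 (u 1) (by simpa using hu 1) (-b2)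
  obtain ⟨g0, g1, g2⟩ := coeff_zpow 2 (u 2) (by simpa using hu 2) b1
  obtain ⟨h0, h1, h2⟩ := coeff_zpow 3 (u 3) (by simpa using hu 3) (-b0)
  rw [Units.val_mul, Units.val_mul] at hc
  have c1 : coeff 1 c = ((b2 - 2*b1 + 3*b0 : ℤ) : ℚ) := by
    rw [hc, coeff_mul_one', coeff_mul_one', coeff_zero_eq_constantCoeff, map_mul]
    rw [coeff_zero_eq_constantCoeff] at f0 g0 h0
    rw [f0, f1, g0, g1, h0, h1]; push_cast; ring
  have c2 : coeff 2 c =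
      ((b2*(b2+1) : ℤ) : ℚ)/2 + 2*b1*(b1-1) + ((9*(b0*(b0+1)) : ℤ):ℚ)/2
        - 2*b1*b2 + 3*b0*b2 - 6*b0*b1 := by
    rw [hc, coeff_mul_two', coeff_mul_two', coeff_mul_one', coeff_zero_eq_constantCoeff,
      map_mul]
    rw [coeff_zero_eq_constantCoeff] at f0 g0 h0
    rw [f0, f1, f2, g0, g1, g2, h0, h1, h2]; push_cast; ring
  have key : 2 * ((PowerSeries.coeff 1) c ^ 2 - (PowerSeries.coeff 2) c) =
      ((a2 ^ 2 - 2 * a0 + 2 * a1 - a2 : ℤ) : ℚ) := by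
    rw [c1, c2, ha0, ha1, ha2]; push_cast; ring
  refine ⟨key, ?_⟩
  have := key
  constructor
  · intro h
    have h2 : (0:ℚ) ≤ ((a2 ^ 2 - 2 * a0 + 2 * a1 - a2 : ℤ) : ℚ) := by
      rw [← key]; linarith
    exact_mod_cast h2
  · intro h
    have h2 : (0:ℚ) ≤ ((a2 ^ 2 - 2 * a0 + 2 * a1 - a2 : ℤ) : ℚ) := by exact_mod_cast h
    rw [← key] at h2; linarith
end

section
/- Let b₀, b₁, b₂, b₃ be integers and set a₀ = b₀, a₁ = b₁ − 2b₀, a₂ = b₂ − 2b₁ + 3b₀, a₃ = b₃ − 2b₂ + 3b₁ − 4b₀. With c^{(3)}_t = (1 − t)^{−b₃} (1 − 2t)^{b₂} (1 − 3t)^{−b₁} (1 − 4t)^{b₀} in ℚ⟦t⟧ and c_i^{(3)} its t^i-coefficient, one has 3·(c₁^{(3)} c₂^{(3)} − c₃^{(3)}) = a₃³ + 18a₀ − 12a₁ + 6a₂ − a₃. In particular the Schur polynomial c₁^{(3)} c₂^{(3)} − c₃^{(3)} is nonnegative if and only if a₃³ + 18a₀ − 12a₁ + 6a₂ − a₃ ≥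 0. -/
/-!
Statement 10. For integers `b₀, b₁, b₂, b₃`, with `a₀ = b₀`, `a₁ = b₁ − 2b₀`,
`a₂ = b₂ − 2b₁ + 3b₀`, `a₃ = b₃ − 2b₂ + 3b₁ − 4b₀`, and `c_i` the `t^i`-coefficient of
`c^{(3)}_t = (1 − t)^{−b₃} (1 − 2t)^{b₂} (1 − 3t)^{−b₁} (1 − 4t)^{b₀} ∈ ℚ⟦t⟧`, one has
`3 (c₁ c₂ − c₃) = a₃³ + 18a₀ − 12a₁ + 6a₂ − a₃`; in particular the Schur polynomial
`c₁ c₂ − c₃` is nonnegative iff `a₃³ + 18a₀ − 12a₁ + 6a₂ − a₃ ≥ 0`.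
-/


open PowerSeries

private lemma mul_u (k : ℚ) (f : PowerSeries ℚ) :
    coeff 0 (f * (1 - C k * X)) = coeff 0 f ∧
    coeff 1 (f * (1 - C k * X)) = coeff 1 f - k * coeff 0 f ∧
    coeff 2 (f * (1 - C k * X)) = coeff 2 f - k * coeff 1 f ∧
    coeff 3 (f * (1 - C k * X)) = coeff 3 f - k * coeff 2 f := by
  have h : f * (1 - C k * X) = f - C k * (f * X) := by ring
  rw [h]
  refine ⟨?_, ?_, ?_, ?_⟩ <;>
    simp [map_sub, coeff_C_mul, coeff_succ_mul_X, coeff_zero_mul_X]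

private lemma zpow_coeffs (k : ℚ) (u : (PowerSeries ℚ)ˣ)
    (hu : (u : PowerSeries ℚ) = 1 - C k * X) (n : ℤ) :
    coeff 0 ((u ^ n : (PowerSeries ℚ)ˣ) : PowerSeries ℚ) = 1 ∧
    coeff 1 ((u ^ n : (PowerSeries ℚ)ˣ) : PowerSeries ℚ) = -(n : ℚ) * k ∧
    coeff 2 ((u ^ n : (PowerSeries ℚ)ˣ) : PowerSeries ℚ) = (n : ℚ) * (n - 1) / 2 * k ^ 2 ∧
    coeff 3 ((u ^ n : (PowerSeries ℚ)ˣ) : PowerSeries ℚ) =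
      -((n : ℚ) * (n - 1) * (n - 2) / 6) * k ^ 3 := by
  induction n using Int.induction_on with
  | zero => norm_num
  | succ m ih =>
      obtain ⟨h0, h1, h2, h3⟩ := ih
      have key : ((u ^ ((m : ℤ) + 1) : (PowerSeries ℚ)ˣ) : PowerSeries ℚ)
          = ((u ^ (m : ℤ) : (PowerSeries ℚ)ˣ) : PowerSeries ℚ) * (1 - C k * X) := by
        rw [← hu, ← Units.val_mul, zpow_add_one]
      obtain ⟨g0, g1, g2, g3⟩ := mul_u k ((u ^ (m : ℤ) : (PowerSeries ℚ)ˣ) : PowerSeries ℚ)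
      rw [key, g0, g1, g2, g3, h0, h1, h2, h3]
      push_cast
      refine ⟨by ring, by ring, by ring, by ring⟩
  | pred m ih =>
      obtain ⟨h0, h1, h2, h3⟩ := ih
      have key : ((u ^ (-(m : ℤ)) : (PowerSeries ℚ)ˣ) : PowerSeries ℚ)
          = ((u ^ (-(m : ℤ) - 1) : (PowerSeries ℚ)ˣ) : PowerSeries ℚ) * (1 - C k * X) := by
        rw [← hu, ← Units.val_mul, ← zpow_add_one]
        ring_nf
      obtain ⟨g0, g1, g2, g3⟩ := mul_u k ((u ^ (-(m : ℤ) - 1) : (PowerSeries ℚ)ˣ) : PowerSeries ℚ)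
      rw [key] at h0 h1 h2 h3
      rw [g0] at h0
      rw [g1, h0] at h1
      rw [g2] at h2
      rw [g3] at h3
      set d0 := coeff 0 ((u ^ (-(m : ℤ) - 1) : (PowerSeries ℚ)ˣ) : PowerSeries ℚ)
      set d1 := coeff 1 ((u ^ (-(m : ℤ) - 1) : (PowerSeries ℚ)ˣ) : PowerSeries ℚ)
      set d2 := coeff 2 ((u ^ (-(m : ℤ) - 1) : (PowerSeries ℚ)ˣ) : PowerSeries ℚ)
      set d3 := coeff 3 ((u ^ (-(m : ℤ) - 1) : (PowerSeries ℚ)ˣ) : PowerSeries ℚ)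
      push_cast at h0 h1 h2 h3 ⊢
      have e1 : d1 = -(-(m:ℚ) - 1) * k := by linarith [h1]
      have e2 : d2 = (-(m:ℚ) - 1) * (-(m:ℚ) - 1 - 1) / 2 * k ^ 2 := by
        linear_combination h2 + k * e1
      have e3 : d3 = -((-(m:ℚ) - 1) * (-(m:ℚ) - 1 - 1) * (-(m:ℚ) - 1 - 2) / 6) * k ^ 3 := by
        linear_combination h3 + k * e2
      exact ⟨h0, e1, e2, e3⟩

open PowerSeries
private lemma prod_coeffs (f g : PowerSeries ℚ) :
    coeff 0 (f * g) = coeff 0 f * coeff 0 g ∧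
    coeff 1 (f * g) = coeff 0 f * coeff 1 g + coeff 1 f * coeff 0 g ∧
    coeff 2 (f * g) = coeff 0 f * coeff 2 g + coeff 1 f * coeff 1 g
      + coeff 2 f * coeff 0 g ∧
    coeff 3 (f * g) = coeff 0 f * coeff 3 g + coeff 1 f * coeff 2 g
      + coeff 2 f * coeff 1 g + coeff 3 f * coeff 0 g := by
  refine ⟨?_, ?_, ?_, ?_⟩ <;>
    · rw [PowerSeries.coeff_mul, Finset.Nat.sum_antidiagonal_eq_sum_range_succ_mk]
      simp [Finset.sum_range_succ]


theorem stmt10 (b0 b1 b2 b3 a0 a1 a2 a3 : ℤ)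
    (ha0 : a0 = b0) (ha1 : a1 = b1 - 2 * b0) (ha2 : a2 = b2 - 2 * b1 + 3 * b0)
    (ha3 : a3 = b3 - 2 * b2 + 3 * b1 - 4 * b0)
    (u : ℕ → (PowerSeries ℚ)ˣ)
    (hu : ∀ k, (u k : PowerSeries ℚ) = 1 - PowerSeries.C (k : ℚ) * PowerSeries.X)
    (c : PowerSeries ℚ)
    (hc : c = ((u 1 ^ (-b3) * u 2 ^ b2 * u 3 ^ (-b1) * u 4 ^ b0 :
      (PowerSeries ℚ)ˣ) : PowerSeries ℚ)) :
    3 * ((PowerSeries.coeff 1) c * (PowerSeries.coeff 2) c - (PowerSeries.coeff 3) c) =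
      ((a3 ^ 3 + 18 * a0 - 12 * a1 + 6 * a2 - a3 : ℤ) : ℚ) ∧
    (0 ≤ (PowerSeries.coeff 1) c * (PowerSeries.coeff 2) c - (PowerSeries.coeff 3) c ↔
      0 ≤ a3 ^ 3 + 18 * a0 - 12 * a1 + 6 * a2 - a3) := by
  obtain ⟨p0, p1, p2, p3⟩ := zpow_coeffs ((1 : ℕ) : ℚ) (u 1) (hu 1) (-b3)
  obtain ⟨q0, q1, q2, q3⟩ := zpow_coeffs ((2 : ℕ) : ℚ) (u 2) (hu 2) b2
  obtain ⟨r0, r1, r2, r3⟩ := zpow_coeffs ((3 : ℕ) : ℚ) (u 3) (hu 3) (-b1)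
  obtain ⟨s0, s1, s2, s3⟩ := zpow_coeffs ((4 : ℕ) : ℚ) (u 4) (hu 4) b0
  rw [Units.val_mul, Units.val_mul, Units.val_mul] at hc
  set f1 := ((u 1 ^ (-b3) : (PowerSeries ℚ)ˣ) : PowerSeries ℚ)
  set f2 := ((u 2 ^ b2 : (PowerSeries ℚ)ˣ) : PowerSeries ℚ)
  set f3 := ((u 3 ^ (-b1) : (PowerSeries ℚ)ˣ) : PowerSeries ℚ)
  set f4 := ((u 4 ^ b0 : (PowerSeries ℚ)ˣ) : PowerSeries ℚ)
  obtain ⟨A0, A1, A2, A3⟩ := prod_coeffs f1 f2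
  obtain ⟨B0, B1, B2, B3⟩ := prod_coeffs (f1 * f2) f3
  obtain ⟨C0, C1, C2, C3⟩ := prod_coeffs (f1 * f2 * f3) f4
  have key : 3 * ((PowerSeries.coeff 1) c * (PowerSeries.coeff 2) c -
      (PowerSeries.coeff 3) c) = ((a3 ^ 3 + 18 * a0 - 12 * a1 + 6 * a2 - a3 : ℤ) : ℚ) := by
    rw [hc]
    simp only [C1, C2, C3, B0, B1, B2, B3, A0, A1, A2, A3, p0, p1, p2, p3,
      q0, q1, q2, q3, r0, r1, r2, r3, s0, s1, s2, s3]
    subst ha0 ha1 ha2 ha3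
    push_cast
    ring
  refine ⟨key, ?_, ?_⟩
  · intro h
    have h2 : (0:ℚ) ≤ ((a3 ^ 3 + 18 * a0 - 12 * a1 + 6 * a2 - a3 : ℤ) : ℚ) := by
      rw [← key]; linarith
    exact_mod_cast h2
  · intro h
    have h2 : (0:ℚ) ≤ ((a3 ^ 3 + 18 * a0 - 12 * a1 + 6 * a2 - a3 : ℤ) : ℚ) := by
      exact_mod_cast h
    linarith [key]
end

section
/- Let b₀, b₁, b₂, b₃ be integers and set a₀ = b₀, a₁ = b₁ − 2b₀, a₂ = b₂ − 2b₁ + 3b₀, a₃ = b₃ − 2b₂ + 3b₁ − 4b₀. With c^{(3)}_t = (1 − t)^{−b₃} (1 − 2t)^{b₂} (1 − 3t)^{−b₁} (1 − 4t)^{b₀} in ℚ⟦t⟧ and c_i^{(3)} its t^i-coefficient, one has 6·([c₁^{(3)}]³ − 2 c₁^{(3)} c₂^{(3)} + c₃^{(3)}) = a₃³ + 6(a₀a₃ − a₁a₃ + a₂a₃) − 3a₃² − 36a₀ + 24a₁ − 12a₂ + 2a₃. -/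
/-!
Statement 11. For integers `b₀, b₁, b₂, b₃`, with `a₀ = b₀`, `a₁ = b₁ − 2b₀`,
`a₂ = b₂ − 2b₁ + 3b₀`, `a₃ = b₃ − 2b₂ + 3b₁ − 4b₀`, and `c_i` the `t^i`-coefficient of
`c^{(3)}_t = (1 − t)^{−b₃} (1 − 2t)^{b₂} (1 − 3t)^{−b₁} (1 − 4t)^{b₀} ∈ ℚ⟦t⟧`, one has
`6 (c₁³ − 2c₁c₂ + c₃) = a₃³ + 6(a₀a₃ − a₁a₃ + a₂a₃) − 3a₃² − 36a₀ + 24a₁ − 12a₂ + 2a₃`.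
-/

open PowerSeries

lemma cm0 (f g : PowerSeries ℚ) : coeff 0 (f*g) =
    coeff 0 f * coeff 0 g := by
  simp [coeff_zero_eq_constantCoeff, map_mul]

lemma cm1 (f g : PowerSeries ℚ) : coeff 1 (f*g) =
    coeff 0 f * coeff 1 g + coeff 1 f * coeff 0 g := by
  rw [coeff_mul, Finset.Nat.sum_antidiagonal_eq_sum_range_succ_mk]
  simp [Finset.sum_range_succ]

lemma cm2 (f g : PowerSeries ℚ) : coeff 2 (f*g) =
    coeff 0 f * coeff 2 g + coeff 1 f * coeff 1 g + coeff 2 f * coeff 0 g := by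
  rw [coeff_mul, Finset.Nat.sum_antidiagonal_eq_sum_range_succ_mk]
  simp [Finset.sum_range_succ]

lemma cm3 (f g : PowerSeries ℚ) : coeff 3 (f*g) =
    coeff 0 f * coeff 3 g + coeff 1 f * coeff 2 g + coeff 2 f * coeff 1 g
      + coeff 3 f * coeff 0 g := by
  rw [coeff_mul, Finset.Nat.sum_antidiagonal_eq_sum_range_succ_mk]
  simp [Finset.sum_range_succ]

lemma ucoeff (v : (PowerSeries ℚ)ˣ) (k : ℚ)
    (hv : (v : PowerSeries ℚ) = 1 - PowerSeries.C k * PowerSeries.X) :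
    coeff 0 (v : PowerSeries ℚ) = 1 ∧ coeff 1 (v : PowerSeries ℚ) = -k ∧
    coeff 2 (v : PowerSeries ℚ) = 0 ∧ coeff 3 (v : PowerSeries ℚ) = 0 := by
  rw [hv]
  simp [coeff_X]

lemma uinvcoeff (v : (PowerSeries ℚ)ˣ) (k : ℚ)
    (hv : (v : PowerSeries ℚ) = 1 - PowerSeries.C k * PowerSeries.X) :
    coeff 0 ((v⁻¹ : (PowerSeries ℚ)ˣ) : PowerSeries ℚ) = 1 ∧
    coeff 1 ((v⁻¹ : (PowerSeries ℚ)ˣ) : PowerSeries ℚ) = k ∧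
    coeff 2 ((v⁻¹ : (PowerSeries ℚ)ˣ) : PowerSeries ℚ) = k^2 ∧
    coeff 3 ((v⁻¹ : (PowerSeries ℚ)ˣ) : PowerSeries ℚ) = k^3 := by
  obtain ⟨h0, h1, h2, h3⟩ := ucoeff v k hv
  have hv1 : ((v⁻¹ : (PowerSeries ℚ)ˣ) : PowerSeries ℚ) * (v : PowerSeries ℚ) = 1 := by
    exact v.inv_mul
  have e0 := congrArg (coeff 0) hv1
  have e1 := congrArg (coeff 1) hv1
  have e2 := congrArg (coeff 2) hv1
  have e3 := congrArg (coeff 3) hv1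
  rw [coeff_zero_eq_constantCoeff, map_mul, ← coeff_zero_eq_constantCoeff] at e0
  rw [cm1] at e1; rw [cm2] at e2; rw [cm3] at e3
  rw [h0] at e0 e1 e2 e3
  rw [h1] at e1 e2 e3
  rw [h2] at e2 e3
  rw [h3] at e3
  simp only [coeff_one, mul_one] at e0 e1 e2 e3
  norm_num at e0 e1 e2 e3
  rw [e0, inv_one] at e1
  have g0 : coeff 0 ((v⁻¹ : (PowerSeries ℚ)ˣ) : PowerSeries ℚ) = 1 := by
    rw [coeff_zero_eq_constantCoeff]; simp [e0]
  have g1 : coeff 1 ((v⁻¹ : (PowerSeries ℚ)ˣ) : PowerSeries ℚ) = k := by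
    linear_combination e1
  have g2 : coeff 2 ((v⁻¹ : (PowerSeries ℚ)ˣ) : PowerSeries ℚ) = k^2 := by
    linear_combination e2 + k * g1
  exact ⟨g0, g1, g2, by linear_combination e3 + k * g2⟩

lemma zpowcoeff (v : (PowerSeries ℚ)ˣ) (k : ℚ)
    (hv : (v : PowerSeries ℚ) = 1 - PowerSeries.C k * PowerSeries.X) (n : ℤ) :
    coeff 0 ((v ^ n : (PowerSeries ℚ)ˣ) : PowerSeries ℚ) = 1 ∧
    coeff 1 ((v ^ n : (PowerSeries ℚ)ˣ) : PowerSeries ℚ) = -(n : ℚ) * k ∧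
    coeff 2 ((v ^ n : (PowerSeries ℚ)ˣ) : PowerSeries ℚ) = (n : ℚ) * ((n : ℚ) - 1) / 2 * k ^ 2 ∧
    coeff 3 ((v ^ n : (PowerSeries ℚ)ˣ) : PowerSeries ℚ)
      = -((n : ℚ) * ((n : ℚ) - 1) * ((n : ℚ) - 2)) / 6 * k ^ 3 := by
  obtain ⟨p0, p1, p2, p3⟩ := ucoeff v k hv
  obtain ⟨q0, q1, q2, q3⟩ := uinvcoeff v k hv
  induction n using Int.induction_on with
  | zero => simp [coeff_one]
  | succ i ih =>
      obtain ⟨i0, i1, i2, i3⟩ := ih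
      have h : ((v ^ ((i : ℤ) + 1) : (PowerSeries ℚ)ˣ) : PowerSeries ℚ)
          = ((v ^ (i : ℤ) : (PowerSeries ℚ)ˣ) : PowerSeries ℚ) * (v : PowerSeries ℚ) := by
        rw [zpow_add_one, Units.val_mul]
      rw [h, cm0, cm1, cm2, cm3] at *
      rw [i0, i1, i2, i3, p0, p1, p2, p3]
      push_cast
      refine ⟨by ring, by ring, by ring, by ring⟩
  | pred i ih =>
      obtain ⟨i0, i1, i2, i3⟩ := ih
      have h : ((v ^ (-(i : ℤ) - 1) : (PowerSeries ℚ)ˣ) : PowerSeries ℚ)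
          = ((v ^ (-(i : ℤ)) : (PowerSeries ℚ)ˣ) : PowerSeries ℚ)
            * ((v⁻¹ : (PowerSeries ℚ)ˣ) : PowerSeries ℚ) := by
        rw [zpow_sub_one, Units.val_mul]
      rw [h, cm0, cm1, cm2, cm3] at *
      rw [i0, i1, i2, i3, q0, q1, q2, q3]
      push_cast
      refine ⟨by ring, by ring, by ring, by ring⟩

theorem stmt11 (b0 b1 b2 b3 a0 a1 a2 a3 : ℤ)
    (ha0 : a0 = b0) (ha1 : a1 = b1 - 2 * b0) (ha2 : a2 = b2 - 2 * b1 + 3 * b0)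
    (ha3 : a3 = b3 - 2 * b2 + 3 * b1 - 4 * b0)
    (u : ℕ → (PowerSeries ℚ)ˣ)
    (hu : ∀ k, (u k : PowerSeries ℚ) = 1 - PowerSeries.C (k : ℚ) * PowerSeries.X)
    (c : PowerSeries ℚ)
    (hc : c = ((u 1 ^ (-b3) * u 2 ^ b2 * u 3 ^ (-b1) * u 4 ^ b0 :
      (PowerSeries ℚ)ˣ) : PowerSeries ℚ)) :
    6 * ((PowerSeries.coeff 1) c ^ 3 -
        2 * (PowerSeries.coeff 1) c * (PowerSeries.coeff 2) c +
        (PowerSeries.coeff 3) c) =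
      ((a3 ^ 3 + 6 * (a0 * a3 - a1 * a3 + a2 * a3) - 3 * a3 ^ 2
          - 36 * a0 + 24 * a1 - 12 * a2 + 2 * a3 : ℤ) : ℚ) := by
  subst hc
  rw [ha0, ha1, ha2, ha3]
  obtain ⟨A0, A1, A2, A3⟩ := zpowcoeff (u 1) _ (hu 1) (-b3)
  obtain ⟨B0, B1, B2, B3⟩ := zpowcoeff (u 2) _ (hu 2) b2
  obtain ⟨C0, C1, C2, C3⟩ := zpowcoeff (u 3) _ (hu 3) (-b1)
  obtain ⟨D0, D1, D2, D3⟩ := zpowcoeff (u 4) _ (hu 4) b0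
  simp only [Units.val_mul]
  simp only [cm0, cm1, cm2, cm3]
  rw [A0, A1, A2, A3, B0, B1, B2, B3, C0, C1, C2, C3, D0, D1, D2, D3]
  push_cast
  ring
end
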